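/- Let a, b > 0 be reals and L ≥ 0 an integer. Then (b/a)^{2L} · ∫₀¹ J₀(b√τ) · ( J₀(a√τ) − ∑_{k=0}^{L−1} (1−τ)^k · ((a/2)^k/k!) · J_k(a) ) dτ = (b/a)^{L} · ∫₀¹ J_L(a√τ) · J_L(b√τ) dτ. (This is Proposition 9 of the paper.) -/

import Mathlib

open MeasureTheory Finset Matrix

/-- The entire function `₀F₁(1;x) = ∑ xⁿ/(n!)²` (real argument). -/
noncomputable def f01 (x : ℝ) : ℝ := ∑' n : ℕ, x ^ n / ((n.factorial : ℝ)) ^ 2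

/-- The entire function `₀F₁(1;x) = ∑ xⁿ/(n!)²` (complex argument). -/
noncomputable def f01C (x : ℂ) : ℂ := ∑' n : ℕ, x ^ n / ((n.factorial : ℂ)) ^ 2

/-- Vandermonde product `Δ(x₁,…,x_m) = ∏_{i<j} (x_j − x_i)`. -/
noncomputable def vand {m : ℕ} (x : Fin m → ℝ) : ℝ :=
  ∏ p ∈ Finset.univ.filter (fun p : Fin m × Fin m => p.1 < p.2), (x p.2 - x p.1)

/-- The nonnegative orthant `[0,∞)^m`. -/
def orth (m : ℕ) : Set (Fin m → ℝ) := Set.univ.pi fun _ => Set.Ici (0 : ℝ)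

/-- The joint density `Δ(x)·det(₀F₁(1;ω_k x_j))·∏ x_i^L e^{−x_i}` of the squared
singular values. -/
noncomputable def dens (N L : ℕ) (ω : Fin N → ℝ) (x : Fin N → ℝ) : ℝ :=
  vand x * Matrix.det (Matrix.of fun k j : Fin N => f01 (ω k * x j)) *
    ∏ i, (x i ^ L * Real.exp (-x i))

/-- The matrix weight `w(X) = exp(−Tr(XX*)+Tr(ΩX)+Tr(X*Ω*))·det(X*X)^L`
(complex-valued; its value is in fact real). -/
noncomputable def W (N L : ℕ) (Ω X : Matrix (Fin N) (Fin N) ℂ) : ℂ :=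
  Complex.exp (-Matrix.trace (X * Xᴴ) + Matrix.trace (Ω * X) + Matrix.trace (Xᴴ * Ωᴴ)) *
    Matrix.det (Xᴴ * X) ^ L

/-- Matrix-model average `⟨h⟩ = (∫ h(X) w(X) dX)/(∫ w(X) dX)`, the integrals being
over Lebesgue measure on the 2N² real coordinates of X. -/
noncomputable def mavg (N L : ℕ) (Ω : Matrix (Fin N) (Fin N) ℂ)
    (h : Matrix (Fin N) (Fin N) ℂ → ℂ) : ℂ :=
  (∫ X : Fin N → Fin N → ℂ, h (Matrix.of X) * W N L Ω (Matrix.of X)) /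
    ∫ X : Fin N → Fin N → ℂ, W N L Ω (Matrix.of X)

/-- Eigenvalue-ensemble average `E_{ω,L}[g]` with respect to the density `dens`. -/
noncomputable def Eavg (N L : ℕ) (ω : Fin N → ℝ) (g : (Fin N → ℝ) → ℂ) : ℂ :=
  (∫ x in orth N, g x * (dens N L ω x : ℂ)) /
    ((∫ x in orth N, dens N L ω x : ℝ) : ℂ)

/-- The normalization `Ñ_L = ∫_{[0,∞)^L} ∏_{i,j}(t_i+ω_j)·Δ(t)²·∏ e^{−t_i} dt`. -/
noncomputable def Ntilde (N L : ℕ) (ω : Fin N → ℝ) : ℝ :=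
  ∫ t in orth L, (∏ i, ∏ j, (t i + ω j)) * vand t ^ 2 * ∏ i, Real.exp (-(t i))

/-- The degenerate normalization `Ñ_L(ρ) = ∫_{[0,∞)^L} ∏ (t_i+ρ)^N·Δ(t)²·∏ e^{−t_i} dt`. -/
noncomputable def NtildeDeg (N L : ℕ) (ρ : ℝ) : ℝ :=
  ∫ t in orth L, (∏ i, (t i + ρ) ^ N) * vand t ^ 2 * ∏ i, Real.exp (-(t i))

/-- The Laguerre polynomial `L_n(x) = ∑_{k=0}^n (n choose k)(−x)^k/k!`. -/
noncomputable def laguerre (n : ℕ) (x : ℝ) : ℝ :=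
  ∑ k ∈ Finset.range (n + 1), (n.choose k : ℝ) * (-x) ^ k / (k.factorial : ℝ)

/-- The monic Laguerre polynomial `π_n(x) = (−1)^n n! L_n(x)`. -/
noncomputable def piL (n : ℕ) (x : ℝ) : ℝ := (-1 : ℝ) ^ n * (n.factorial : ℝ) * laguerre n x

/-- The Bessel function `J_k(x) = ∑_m (−1)^m (x/2)^{2m+k}/(m!(m+k)!)`. -/
noncomputable def besselJ (k : ℕ) (x : ℝ) : ℝ :=
  ∑' m : ℕ, (-1 : ℝ) ^ m * (x / 2) ^ (2 * m + k) / ((m.factorial : ℝ) * ((m + k).factorial : ℝ))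

/-- The moment matrix `G_{i,j} = (i−1)!·e^{ω_j}·L_{i−1}(−ω_j)` (0-based indices). -/
noncomputable def Gmat (N : ℕ) (ω : Fin N → ℝ) : Matrix (Fin N) (Fin N) ℝ :=
  Matrix.of fun i j => ((i : ℕ).factorial : ℝ) * Real.exp (ω j) * laguerre (i : ℕ) (-ω j)



section BesselAux
open intervalIntegral

/-- term of the Bessel series -/
noncomputable def uB (k : ℕ) (x : ℝ) (m : ℕ) : ℝ :=
  (-1 : ℝ) ^ m * (x / 2) ^ (2 * m + k) / ((m.factorial : ℝ) * ((m + k).factorial : ℝ))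

lemma norm_uB_le (k : ℕ) (x : ℝ) (m : ℕ) :
    ‖uB k x m‖ ≤ (|x| / 2) ^ k * ((x / 2) ^ 2) ^ m / m.factorial := by
  have h1 : (1:ℝ) ≤ ((m + k).factorial : ℝ) := by exact_mod_cast (m+k).factorial_pos
  have h0 : (0:ℝ) < (m.factorial : ℝ) := by exact_mod_cast m.factorial_pos
  have : ‖uB k x m‖ = (|x| / 2) ^ (2 * m + k) / ((m.factorial : ℝ) * ((m + k).factorial : ℝ)) := by
    rw [uB, norm_div, norm_mul, norm_pow, norm_pow]
    simp [abs_div, abs_of_nonneg, Nat.cast_nonneg, abs_mul]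
  rw [this]
  have hnum : (|x| / 2) ^ (2 * m + k) = (|x| / 2) ^ k * ((x / 2) ^ 2) ^ m := by
    rw [pow_add, mul_comm 2 m, pow_mul, mul_comm]
    congr 1
    rw [← pow_mul, ← pow_mul, mul_comm m 2, mul_comm 2 m]
    have h2 : |x| / 2 = |x / 2| := by rw [abs_div]; norm_num
    rw [h2, pow_mul, ← abs_pow, sq_abs, ← pow_mul]
  rw [hnum]
  rw [div_le_div_iff₀ (by positivity) h0]
  have hb : (m.factorial : ℝ) ≤ (m.factorial : ℝ) * ((m + k).factorial : ℝ) := by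
    nlinarith
  calc (|x| / 2) ^ k * ((x / 2) ^ 2) ^ m * (m.factorial:ℝ)
      ≤ (|x| / 2) ^ k * ((x / 2) ^ 2) ^ m * ((m.factorial:ℝ) * ((m+k).factorial:ℝ)) := by
        apply mul_le_mul_of_nonneg_left hb (by positivity)
    _ = _ := by ring

lemma summable_bound (k : ℕ) (x : ℝ) :
    Summable fun m : ℕ => (|x| / 2) ^ k * ((x / 2) ^ 2) ^ m / m.factorial := by
  simpa [mul_div_assoc] using (Real.summable_pow_div_factorial ((x/2)^2)).mul_left ((|x|/2)^k)

lemma summable_norm_uB (k : ℕ) (x : ℝ) : Summable fun m => ‖uB k x m‖ :=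
  (summable_bound k x).of_nonneg_of_le (fun _ => norm_nonneg _) (norm_uB_le k x)

lemma summable_uB (k : ℕ) (x : ℝ) : Summable (uB k x) :=
  (summable_norm_uB k x).of_norm

lemma besselJ_eq_tsum (k : ℕ) (x : ℝ) : besselJ k x = ∑' m, uB k x m := rfl

lemma hasSum_uB (k : ℕ) (x : ℝ) : HasSum (uB k x) (besselJ k x) :=
  (summable_uB k x).hasSum

/-- scaling: `uB k (x*√τ) m = uB k x m * τ^... ` for τ ≥ 0 -/
lemma uB_scale (k : ℕ) (x t : ℝ) (m : ℕ) :
    uB k (x * t) m = uB k x m * t ^ (2 * m + k) := by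
  unfold uB
  rw [show x * t / 2 = (x/2)*t by ring, mul_pow]
  ring

lemma beta_nat (n k : ℕ) : (∫ τ in (0:ℝ)..1, τ^n * (1-τ)^k)
    = (n.factorial : ℝ) * k.factorial / (n+k+1).factorial := by
  induction k generalizing n with
  | zero =>
    simp only [pow_zero, mul_one, integral_pow]
    rw [Nat.factorial_zero, Nat.factorial_succ]
    push_cast
    have : ((n.factorial : ℝ)) ≠ 0 := by exact_mod_cast n.factorial_ne_zero
    field_simp
    simp
  | succ k ih =>
    have h1 : ∀ τ : ℝ, τ^n * (1-τ)^(k+1) = τ^n*(1-τ)^k - τ^(n+1)*(1-τ)^k := fun τ => by ring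
    rw [intervalIntegral.integral_congr (fun τ _ => h1 τ),
      intervalIntegral.integral_sub
        ((show Continuous fun τ : ℝ => τ^n * (1-τ)^k from Continuous.mul (continuous_pow n) (by continuity)).intervalIntegrable 0 1)
        ((show Continuous fun τ : ℝ => τ^(n+1) * (1-τ)^k from Continuous.mul (continuous_pow (n+1)) (by continuity)).intervalIntegrable 0 1),
      ih n, ih (n+1)]
    rw [show n+(k+1)+1 = (n+k+1)+1 from by ring, show n+1+k+1 = (n+k+1)+1 from by ring,
      Nat.factorial_succ (n+k+1), Nat.factorial_succ k, Nat.factorial_succ n]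
    have h2 : ((n+k+1).factorial : ℝ) ≠ 0 := by exact_mod_cast (n+k+1).factorial_ne_zero
    push_cast
    field_simp
    ring

lemma beta_le_one (n k : ℕ) : (n.factorial : ℝ) * k.factorial / (n+k+1).factorial ≤ 1 := by
  rw [div_le_one (by exact_mod_cast (n+k+1).factorial_pos)]
  have h1 : n.factorial * k.factorial ≤ (n+k).factorial :=
    Nat.le_of_dvd (n+k).factorial_pos (Nat.factorial_mul_factorial_dvd_factorial_add n k)
  have h2 : (n+k).factorial ≤ (n+k+1).factorial := Nat.factorial_le (Nat.le_succ _)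
  exact_mod_cast h1.trans h2

lemma interchange {ι : Type} [Countable ι] (C : ι → ℝ) (p q : ι → ℕ)
    (hC : Summable fun i => ‖C i‖) :
    (∫ τ in (0:ℝ)..1, ∑' i, C i * (τ^(p i) * (1-τ)^(q i)))
      = ∑' i, C i * ((p i).factorial * (q i).factorial / (p i + q i + 1).factorial) := by
  have hcont : ∀ i, Continuous fun τ : ℝ => C i * (τ^(p i) * (1-τ)^(q i)) := by
    intro i; continuity
  have hint : ∀ i, IntegrableOn (fun τ : ℝ => C i * (τ^(p i) * (1-τ)^(q i))) (Set.Ioc 0 1) := by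
    intro i
    exact ((hcont i).integrableOn_Icc).mono_set Set.Ioc_subset_Icc_self
  have hbound : ∀ i, (∫ τ in Set.Ioc (0:ℝ) 1, ‖C i * (τ^(p i) * (1-τ)^(q i))‖) ≤ ‖C i‖ := by
    intro i
    have hpt : ∀ τ ∈ Set.Ioc (0:ℝ) 1, ‖C i * (τ^(p i) * (1-τ)^(q i))‖ ≤ ‖C i‖ := by
      intro τ hτ
      rw [norm_mul]
      have h1 : ‖τ^(p i) * (1-τ)^(q i)‖ ≤ 1 := by
        rw [norm_mul, norm_pow, norm_pow]
        have : ‖τ‖ ≤ 1 := by rw [Real.norm_eq_abs, abs_le]; constructor <;> [linarith [hτ.1]; exact hτ.2]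
        have h2 : ‖1-τ‖ ≤ 1 := by rw [Real.norm_eq_abs, abs_le]; constructor <;> [linarith [hτ.2]; linarith [hτ.1]]
        calc ‖τ‖^(p i) * ‖1-τ‖^(q i) ≤ 1 * 1 := by
              apply mul_le_mul (pow_le_one₀ (norm_nonneg _) this)
                (pow_le_one₀ (norm_nonneg _) h2) (by positivity) zero_le_one
          _ = 1 := by norm_num
      calc ‖C i‖ * ‖τ^(p i) * (1-τ)^(q i)‖ ≤ ‖C i‖ * 1 :=
            mul_le_mul_of_nonneg_left h1 (norm_nonneg _)
        _ = ‖C i‖ := mul_one _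
    calc (∫ τ in Set.Ioc (0:ℝ) 1, ‖C i * (τ^(p i) * (1-τ)^(q i))‖)
        ≤ ∫ _τ in Set.Ioc (0:ℝ) 1, ‖C i‖ :=
          setIntegral_mono_on (hint i).norm (integrableOn_const (by simp) (by simp))
            measurableSet_Ioc hpt
      _ = ‖C i‖ := by simp [Real.volume_Ioc]
  have hsum : Summable fun i => ∫ τ in Set.Ioc (0:ℝ) 1, ‖C i * (τ^(p i) * (1-τ)^(q i))‖ :=
    hC.of_nonneg_of_le (fun i => integral_nonneg fun τ => norm_nonneg _) hbound
  rw [integral_of_le (by norm_num : (0:ℝ) ≤ 1)]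
  rw [← MeasureTheory.integral_tsum_of_summable_integral_norm hint hsum]
  apply tsum_congr
  intro i
  rw [MeasureTheory.integral_const_mul, ← integral_of_le (by norm_num : (0:ℝ) ≤ 1), beta_nat]

lemma sqrt_pow_even (τ : ℝ) (hτ : 0 ≤ τ) (M : ℕ) : Real.sqrt τ ^ (2 * M) = τ ^ M := by
  rw [pow_mul, Real.sq_sqrt hτ]

lemma intJJ (L : ℕ) (a b : ℝ) :
    (∫ τ in (0:ℝ)..1, besselJ L (a * Real.sqrt τ) * besselJ L (b * Real.sqrt τ))
      = ∑' p : ℕ × ℕ, uB L a p.1 * uB L b p.2 *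
          (((p.1+p.2+L).factorial : ℝ) * (0:ℕ).factorial / (p.1+p.2+L+1).factorial) := by
  have key : ∀ τ ∈ Set.uIcc (0:ℝ) 1,
      besselJ L (a * Real.sqrt τ) * besselJ L (b * Real.sqrt τ)
        = ∑' p : ℕ × ℕ, (uB L a p.1 * uB L b p.2) * (τ^(p.1+p.2+L) * (1-τ)^(0:ℕ)) := by
    intro τ hτ
    rw [Set.uIcc_of_le (by norm_num : (0:ℝ) ≤ 1)] at hτ
    have hτ0 : 0 ≤ τ := hτ.1
    rw [besselJ_eq_tsum, besselJ_eq_tsum,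
      tsum_mul_tsum_of_summable_norm (summable_norm_uB L (a * Real.sqrt τ))
        (summable_norm_uB L (b * Real.sqrt τ))]
    apply tsum_congr
    rintro ⟨j, n⟩
    simp only [pow_zero, mul_one]
    rw [uB_scale, uB_scale]
    rw [show (uB L a j * Real.sqrt τ ^ (2*j+L)) * (uB L b n * Real.sqrt τ ^ (2*n+L))
        = uB L a j * uB L b n * (Real.sqrt τ ^ ((2*j+L)+(2*n+L))) from by rw [pow_add]; ring]
    rw [show (2*j+L)+(2*n+L) = 2*(j+n+L) from by ring, sqrt_pow_even τ hτ0]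
  rw [intervalIntegral.integral_congr key]
  exact interchange (fun p : ℕ × ℕ => uB L a p.1 * uB L b p.2) (fun p => p.1+p.2+L) (fun _ => 0)
    ((summable_norm_uB L a).mul_norm (summable_norm_uB L b))

lemma intS (k : ℕ) (b : ℝ) :
    (∫ τ in (0:ℝ)..1, besselJ 0 (b * Real.sqrt τ) * (1-τ)^k)
      = ∑' n : ℕ, uB 0 b n * ((n.factorial : ℝ) * k.factorial / (n+k+1).factorial) := by
  have key : ∀ τ ∈ Set.uIcc (0:ℝ) 1,
      besselJ 0 (b * Real.sqrt τ) * (1-τ)^k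
        = ∑' n : ℕ, uB 0 b n * (τ^n * (1-τ)^k) := by
    intro τ hτ
    rw [Set.uIcc_of_le (by norm_num : (0:ℝ) ≤ 1)] at hτ
    rw [besselJ_eq_tsum, ← tsum_mul_right]
    apply tsum_congr
    intro n
    rw [uB_scale, show 2*n+0 = 2*n from rfl, sqrt_pow_even τ hτ.1]
    ring
  rw [intervalIntegral.integral_congr key]
  have := interchange (fun n : ℕ => uB 0 b n) (fun n => n) (fun _ => k) (summable_norm_uB 0 b)
  simpa using this

lemma sonine (k : ℕ) (b : ℝ) (hb : b ≠ 0) :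
    (∫ τ in (0:ℝ)..1, besselJ 0 (b * Real.sqrt τ) * (1-τ)^k)
      = 2^(k+1) * (k.factorial : ℝ) / b^(k+1) * besselJ (k+1) b := by
  rw [intS, besselJ_eq_tsum, ← tsum_mul_left]
  apply tsum_congr
  intro n
  unfold uB
  have h1 : ((n.factorial : ℝ)) ≠ 0 := by exact_mod_cast n.factorial_ne_zero
  have h2 : (((n+k+1).factorial : ℝ)) ≠ 0 := by exact_mod_cast (n+k+1).factorial_ne_zero
  rw [show 2*n+(k+1) = (2*n+0)+(k+1) from by ring, pow_add, div_pow]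
  rw [show n+(k+1) = n+k+1 from by ring]
  simp only [div_pow]
  field_simp
  ring

/-- summability of the beta-weighted product family -/
lemma summable_beta_prod (L : ℕ) (a b : ℝ) :
    Summable fun p : ℕ × ℕ => uB L a p.1 * uB L b p.2 *
      (((p.1+p.2+L).factorial : ℝ) * (0:ℕ).factorial / (p.1+p.2+L+1).factorial) := by
  apply Summable.of_norm_bounded ((summable_norm_uB L a).mul_norm (summable_norm_uB L b))
  rintro ⟨j, n⟩
  rw [norm_mul]
  have hβ0 : (0:ℝ) ≤ ((j+n+L).factorial : ℝ) * (0:ℕ).factorial / (j+n+L+1).factorial := by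
    positivity
  have hβ1 := beta_le_one (j+n+L) 0
  rw [show (j+n+L+0+1) = (j+n+L+1) from by ring] at hβ1
  calc ‖uB L a j * uB L b n‖ * ‖((j+n+L).factorial : ℝ) * (0:ℕ).factorial / (j+n+L+1).factorial‖
      ≤ ‖uB L a j * uB L b n‖ * 1 := by
        apply mul_le_mul_of_nonneg_left _ (norm_nonneg _)
        rw [Real.norm_eq_abs, abs_of_nonneg hβ0]; exact hβ1
    _ = ‖uB L a j * uB L b n‖ := mul_one _

lemma summable_prod_uB (k l : ℕ) (a b : ℝ) :
    Summable fun p : ℕ × ℕ => uB k a p.1 * uB l b p.2 :=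
  ((summable_norm_uB k a).mul_norm (summable_norm_uB l b)).of_norm

lemma recJ (L : ℕ) (a b : ℝ) (ha : a ≠ 0) (hb : b ≠ 0) :
    (∫ τ in (0:ℝ)..1, besselJ (L+1) (a * Real.sqrt τ) * besselJ (L+1) (b * Real.sqrt τ))
      = (b/a) * (∫ τ in (0:ℝ)..1, besselJ L (a * Real.sqrt τ) * besselJ L (b * Real.sqrt τ))
        - (2/a) * (besselJ L a * besselJ (L+1) b) := by
  rw [intJJ, intJJ, besselJ_eq_tsum L a, besselJ_eq_tsum (L+1) b,
    tsum_mul_tsum_of_summable_norm (summable_norm_uB L a) (summable_norm_uB (L+1) b),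
    ← tsum_mul_left, ← tsum_mul_left,
    ← Summable.tsum_sub ((summable_beta_prod L a b).mul_left (b/a))
      ((summable_prod_uB L (L+1) a b).mul_left (2/a))]
  -- now: ∑' p, c1 p = ∑' p, e p
  set e : ℕ × ℕ → ℝ := fun p =>
    (b/a) * (uB L a p.1 * uB L b p.2 *
      (((p.1+p.2+L).factorial : ℝ) * (0:ℕ).factorial / (p.1+p.2+L+1).factorial))
    - (2/a) * (uB L a p.1 * uB (L+1) b p.2) with he
  have hzero : ∀ n : ℕ, e (0, n) = 0 := by
    intro n
    rw [he]
    simp only []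
    unfold uB
    have h1 : ((n.factorial : ℝ)) ≠ 0 := by exact_mod_cast n.factorial_ne_zero
    have h2 : (((n+L).factorial : ℝ)) ≠ 0 := by exact_mod_cast (n+L).factorial_ne_zero
    rw [show (0:ℕ)+n+L = n+L from by ring,
      show n+(L+1) = (n+L)+1 from by ring,
      Nat.factorial_succ (n+L),
      show 2*n+(L+1) = (2*n+L)+1 from by ring]
    simp only [pow_succ]
    have h3 : ((n:ℝ)+L+1) ≠ 0 := by positivity
    push_cast
    field_simp
    ring
  have hstep : ∀ j n : ℕ, e (j+1, n) =
      uB (L+1) a j * uB (L+1) b n *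
        (((j+n+(L+1)).factorial : ℝ) * (0:ℕ).factorial / (j+n+(L+1)+1).factorial) := by
    intro j n
    rw [he]
    simp only []
    unfold uB
    have h1 : ((n.factorial : ℝ)) ≠ 0 := by exact_mod_cast n.factorial_ne_zero
    have h2 : (((n+L).factorial : ℝ)) ≠ 0 := by exact_mod_cast (n+L).factorial_ne_zero
    have h3 : ((j.factorial : ℝ)) ≠ 0 := by exact_mod_cast j.factorial_ne_zero
    have h4 : (((j+L+1).factorial : ℝ)) ≠ 0 := by exact_mod_cast (j+L+1).factorial_ne_zero
    have h5 : (((j+n+L).factorial : ℝ)) ≠ 0 := by exact_mod_cast (j+n+L).factorial_ne_zero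
    rw [show j+n+(L+1) = (j+n+L)+1 from by ring,
      show j+1+n+L = (j+n+L)+1 from by ring,
      Nat.factorial_succ ((j+n+L)+1), Nat.factorial_succ (j+n+L),
      Nat.factorial_succ j,
      show j+1+L = (j+L)+1 from by ring, show j+(L+1) = (j+L)+1 from by ring,
      show n+(L+1) = (n+L)+1 from by ring, Nat.factorial_succ (n+L),
      show 2*(j+1)+L = ((2*j+L)+1)+1 from by ring,
      show 2*j+(L+1) = (2*j+L)+1 from by ring,
      show 2*n+(L+1) = (2*n+L)+1 from by ring]
    simp only [pow_succ]
    have h6 : ((j:ℝ)+n+L+2) ≠ 0 := by positivity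
    have h7 : ((j:ℝ)+1) ≠ 0 := by positivity
    have h8 : ((n:ℝ)+L+1) ≠ 0 := by positivity
    have h9 : ((j:ℝ)+L+1) ≠ 0 := by positivity
    push_cast
    field_simp
    ring
  have hinj : Function.Injective (fun q : ℕ × ℕ => (q.1+1, q.2)) := by
    rintro ⟨j, n⟩ ⟨j', n'⟩ h
    simp only [Prod.mk.injEq] at h
    exact Prod.ext (by omega) h.2
  have hsupp : Function.support e ⊆ Set.range (fun q : ℕ × ℕ => (q.1+1, q.2)) := by
    rintro ⟨j, n⟩ hp
    cases j with
    | zero => exact absurd (hzero n) hp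
    | succ j => exact ⟨(j, n), rfl⟩
  rw [← Function.Injective.tsum_eq hinj hsupp]
  apply tsum_congr
  rintro ⟨j, n⟩
  exact (hstep j n).symm

lemma contJcomp (k : ℕ) (c : ℝ) :
    ContinuousOn (fun τ : ℝ => besselJ k (c * Real.sqrt τ)) (Set.Icc 0 1) := by
  have : (fun τ : ℝ => besselJ k (c * Real.sqrt τ))
      = fun τ => ∑' m, uB k (c * Real.sqrt τ) m := rfl
  rw [this]
  apply continuousOn_tsum (u := fun m => (|c| / 2) ^ k * ((c / 2) ^ 2) ^ m / m.factorial)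
  · intro m
    apply Continuous.continuousOn
    unfold uB
    fun_prop
  · exact summable_bound k c
  · intro m τ hτ
    calc ‖uB k (c * Real.sqrt τ) m‖
        ≤ (|c * Real.sqrt τ| / 2) ^ k * (((c * Real.sqrt τ) / 2) ^ 2) ^ m / m.factorial :=
          norm_uB_le k _ m
      _ ≤ (|c| / 2) ^ k * ((c / 2) ^ 2) ^ m / m.factorial := by
          have hs0 : 0 ≤ Real.sqrt τ := Real.sqrt_nonneg τ
          have hs1 : Real.sqrt τ ≤ 1 := by
            rw [show (1:ℝ) = Real.sqrt 1 from (Real.sqrt_one).symm]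
            exact Real.sqrt_le_sqrt hτ.2
          have h1 : |c * Real.sqrt τ| ≤ |c| := by
            rw [abs_mul, abs_of_nonneg hs0]
            calc |c| * Real.sqrt τ ≤ |c| * 1 := by
                  exact mul_le_mul_of_nonneg_left hs1 (abs_nonneg c)
              _ = |c| := mul_one _
          have h2 : ((c * Real.sqrt τ) / 2) ^ 2 ≤ (c / 2) ^ 2 := by
            have e1 : ((c * Real.sqrt τ) / 2) ^ 2 = (c/2)^2 * (Real.sqrt τ)^2 := by ring
            rw [e1, Real.sq_sqrt hτ.1]
            calc (c/2)^2 * τ ≤ (c/2)^2 * 1 := by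
                  exact mul_le_mul_of_nonneg_left hτ.2 (by positivity)
              _ = (c/2)^2 := mul_one _
          have h1' : (|c * Real.sqrt τ| / 2) ^ k ≤ (|c| / 2) ^ k :=
            pow_le_pow_left₀ (by positivity) (by linarith) k
          have h2' : (((c * Real.sqrt τ) / 2) ^ 2) ^ m ≤ ((c / 2) ^ 2) ^ m :=
            pow_le_pow_left₀ (by positivity) h2 m
          have hm : (0:ℝ) < m.factorial := by exact_mod_cast m.factorial_pos
          exact (div_le_div_iff_of_pos_right hm).2 (mul_le_mul h1' h2' (by positivity) (by positivity))

theorem statement12 (a b : ℝ) (ha : 0 < a) (hb : 0 < b) (L : ℕ) :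
    (b / a) ^ (2 * L) *
        ∫ τ in (0 : ℝ)..1,
          besselJ 0 (b * Real.sqrt τ) *
            (besselJ 0 (a * Real.sqrt τ) -
              ∑ k ∈ Finset.range L,
                (1 - τ) ^ k * ((a / 2) ^ k / (k.factorial : ℝ)) * besselJ k a) =
      (b / a) ^ L *
        ∫ τ in (0 : ℝ)..1, besselJ L (a * Real.sqrt τ) * besselJ L (b * Real.sqrt τ) := by
  have ha' : a ≠ 0 := ha.ne'
  have hb' : b ≠ 0 := hb.ne'
  induction L with
  | zero =>
    simp only [mul_zero, pow_zero, one_mul, Finset.range_zero, Finset.sum_empty, sub_zero]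
    exact intervalIntegral.integral_congr (fun τ _ => mul_comm _ _)
  | succ L ih =>
    have hLfac : ((L.factorial : ℝ)) ≠ 0 := by exact_mod_cast L.factorial_ne_zero
    -- continuity facts
    have hcsum : ContinuousOn (fun τ : ℝ => ∑ k ∈ Finset.range L,
        (1 - τ) ^ k * ((a / 2) ^ k / (k.factorial : ℝ)) * besselJ k a) (Set.Icc 0 1) := by
      apply Continuous.continuousOn
      apply continuous_finset_sum
      intro k _
      fun_prop
    have hf : IntervalIntegrable (fun τ : ℝ => besselJ 0 (b * Real.sqrt τ) *
        (besselJ 0 (a * Real.sqrt τ) - ∑ k ∈ Finset.range L,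
          (1 - τ) ^ k * ((a / 2) ^ k / (k.factorial : ℝ)) * besselJ k a)) volume 0 1 := by
      apply ContinuousOn.intervalIntegrable
      rw [Set.uIcc_of_le (by norm_num : (0:ℝ) ≤ 1)]
      exact (contJcomp 0 b).mul ((contJcomp 0 a).sub hcsum)
    have hg : IntervalIntegrable (fun τ : ℝ => besselJ 0 (b * Real.sqrt τ) * (1-τ)^L)
        volume 0 1 := by
      apply ContinuousOn.intervalIntegrable
      rw [Set.uIcc_of_le (by norm_num : (0:ℝ) ≤ 1)]
      exact (contJcomp 0 b).mul (Continuous.continuousOn (by fun_prop))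
    -- split the integral
    have hsplit : (∫ τ in (0:ℝ)..1, besselJ 0 (b * Real.sqrt τ) *
          (besselJ 0 (a * Real.sqrt τ) - ∑ k ∈ Finset.range (L+1),
            (1 - τ) ^ k * ((a / 2) ^ k / (k.factorial : ℝ)) * besselJ k a))
        = (∫ τ in (0:ℝ)..1, besselJ 0 (b * Real.sqrt τ) *
            (besselJ 0 (a * Real.sqrt τ) - ∑ k ∈ Finset.range L,
              (1 - τ) ^ k * ((a / 2) ^ k / (k.factorial : ℝ)) * besselJ k a))
          - ((a / 2) ^ L / (L.factorial : ℝ) * besselJ L a) *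
              ∫ τ in (0:ℝ)..1, besselJ 0 (b * Real.sqrt τ) * (1-τ)^L := by
      rw [← intervalIntegral.integral_const_mul, ← intervalIntegral.integral_sub hf
        (hg.const_mul _)]
      apply intervalIntegral.integral_congr
      intro τ _
      simp only [Finset.sum_range_succ]
      ring
    rw [hsplit, sonine L b hb', recJ L a b ha' hb']
    calc (b / a) ^ (2 * (L+1)) *
          ((∫ τ in (0:ℝ)..1, besselJ 0 (b * Real.sqrt τ) *
            (besselJ 0 (a * Real.sqrt τ) - ∑ k ∈ Finset.range L,
              (1 - τ) ^ k * ((a / 2) ^ k / (k.factorial : ℝ)) * besselJ k a))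
          - ((a / 2) ^ L / (L.factorial : ℝ) * besselJ L a) *
              (2^(L+1) * (L.factorial : ℝ) / b^(L+1) * besselJ (L+1) b))
        = (b/a)^2 * ((b / a) ^ (2*L) *
            (∫ τ in (0:ℝ)..1, besselJ 0 (b * Real.sqrt τ) *
            (besselJ 0 (a * Real.sqrt τ) - ∑ k ∈ Finset.range L,
              (1 - τ) ^ k * ((a / 2) ^ k / (k.factorial : ℝ)) * besselJ k a)))
          - (b / a) ^ (2*(L+1)) * ((a / 2) ^ L / (L.factorial : ℝ) * besselJ L a) *
              (2^(L+1) * (L.factorial : ℝ) / b^(L+1) * besselJ (L+1) b) := by ring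
      _ = (b/a)^2 * ((b / a) ^ L *
            ∫ τ in (0:ℝ)..1, besselJ L (a * Real.sqrt τ) * besselJ L (b * Real.sqrt τ))
          - (b / a) ^ (2*(L+1)) * ((a / 2) ^ L / (L.factorial : ℝ) * besselJ L a) *
              (2^(L+1) * (L.factorial : ℝ) / b^(L+1) * besselJ (L+1) b) := by rw [ih]
      _ = (b / a) ^ (L+1) *
          ((b/a) * (∫ τ in (0:ℝ)..1, besselJ L (a * Real.sqrt τ) * besselJ L (b * Real.sqrt τ))
            - (2/a) * (besselJ L a * besselJ (L+1) b)) := by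
          simp only [div_pow]
          field_simp
          ring
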